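/- Schnorr's lower bound: for every n ≥ 1, every DeMorgan circuit computing the parity function XOR_n has at least 3(n − 1) binary gates; that is, CC(XOR_n) ≥ 3(n − 1). -/

import Mathlib

/-- A node (gate) of a DeMorgan circuit on `n` inputs: an input variable, a constant,
a negation of an earlier node, or a binary ∧/∨ of two earlier (ordered) nodes.
Nodes are referenced by their position in the gate list. -/
inductive Gate (n : ℕ) : Type
  | inp : Fin n → Gate n
  | const : Bool → Gate n
  | not : ℕ → Gate n
  | and : ℕ → ℕ → Gate n
  | or : ℕ → ℕ → Gate n
deriving DecidableEq

/-- The (indices of the) nodes a gate reads from. -/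
def Gate.refs {n : ℕ} : Gate n → List ℕ
  | .inp _ => []
  | .const _ => []
  | .not a => [a]
  | .and a b => [a, b]
  | .or a b => [a, b]

/-- A DeMorgan circuit on `n` inputs: a finite DAG of gates, presented as a list in
topological order (every gate only reads strictly earlier gates), with a designated
output node. -/
structure Circuit (n : ℕ) : Type where
  gates : List (Gate n)
  output : Fin gates.length
  wf : ∀ (i : ℕ) (g : Gate n), gates[i]? = some g → ∀ r ∈ g.refs, r < i

/-- Value of a single gate, given the values `acc` of all earlier gates. -/
def Gate.val {n : ℕ} (x : Fin n → Bool) (acc : List Bool) : Gate n → Bool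
  | .inp i => x i
  | .const b => b
  | .not a => !(acc.getD a false)
  | .and a b => acc.getD a false && acc.getD b false
  | .or a b => acc.getD a false || acc.getD b false

/-- The list of values of all gates of the circuit, in topological order. -/
def Circuit.evalList {n : ℕ} (C : Circuit n) (x : Fin n → Bool) : List Bool :=
  C.gates.foldl (fun acc g => acc ++ [g.val x acc]) []

/-- The Boolean value computed by the circuit: the value of its output node. -/
def Circuit.eval {n : ℕ} (C : Circuit n) (x : Fin n → Bool) : Bool :=
  (C.evalList x).getD C.output false

/-- A gate is costly when it is a binary (∧/∨) gate; ¬ gates and constants are free. -/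
def Gate.costly {n : ℕ} : Gate n → Bool
  | .and _ _ => true
  | .or _ _ => true
  | _ => false

/-- The size of a circuit: its number of binary (∧/∨) gates. -/
def Circuit.size {n : ℕ} (C : Circuit n) : ℕ := (C.gates.filter Gate.costly).length

/-- `C` computes the Boolean function `f`. -/
def Circuit.Computes {n : ℕ} (C : Circuit n) (f : (Fin n → Bool) → Bool) : Prop :=
  ∀ x, C.eval x = f x

/-- The DeMorgan circuit complexity of `f`: the minimum number of binary gates of a
DeMorgan circuit computing `f`. -/
noncomputable def CC (n : ℕ) (f : (Fin n → Bool) → Bool) : ℕ :=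
  sInf {s | ∃ C : Circuit n, C.Computes f ∧ C.size = s}

/-- The parity function `XOR_n(x) = (x_1 + ⋯ + x_n) mod 2`. -/
def XORf (n : ℕ) (x : Fin n → Bool) : Bool :=
  decide ((∑ i : Fin n, (if x i then 1 else 0)) % 2 = 1)

section Basic

variable {n : ℕ}

def eAux (x : Fin n → Bool) (L : List (Gate n)) : List Bool :=
  L.foldl (fun acc g => acc ++ [g.val x acc]) []

lemma eAux_concat (x : Fin n → Bool) (L : List (Gate n)) (g : Gate n) :
    eAux x (L ++ [g]) = eAux x L ++ [g.val x (eAux x L)] := by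
  simp [eAux, List.foldl_append]

@[simp] lemma length_eAux (x : Fin n → Bool) (L : List (Gate n)) :
    (eAux x L).length = L.length := by
  induction L using List.reverseRecOn with
  | nil => rfl
  | append_singleton L g ih => rw [eAux_concat]; simp [ih]

lemma eAux_prefix (x : Fin n → Bool) (L M : List (Gate n)) (q : ℕ) (h : q < L.length) :
    (eAux x (L ++ M)).getD q false = (eAux x L).getD q false := by
  induction M using List.reverseRecOn with
  | nil => simp
  | append_singleton M g ih =>
      rw [← List.append_assoc, eAux_concat, List.getD_append]
      · exact ih
      · simp; omega

def Circuit.V (C : Circuit n) (x : Fin n → Bool) (q : ℕ) : Bool :=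
  (C.evalList x).getD q false

lemma evalList_eq_eAux (C : Circuit n) (x : Fin n → Bool) : C.evalList x = eAux x C.gates := rfl

lemma Circuit.V_oob (C : Circuit n) (x : Fin n → Bool) {q : ℕ} (h : C.gates.length ≤ q) :
    C.V x q = false := by
  have : (C.evalList x).length ≤ q := by rw [evalList_eq_eAux, length_eAux]; exact h
  simp [Circuit.V, List.getD_eq_getElem?_getD, List.getElem?_eq_none this]

lemma Circuit.eval_eq_V (C : Circuit n) (x : Fin n → Bool) : C.eval x = C.V x C.output := rfl

lemma Circuit.V_rec (C : Circuit n) (x : Fin n → Bool) {q : ℕ} {g : Gate n}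
    (h : C.gates[q]? = some g) : C.V x q = g.val x (C.evalList x) := by
  have hq : q < C.gates.length := by
    by_contra hq
    rw [List.getElem?_eq_none (by omega)] at h; exact nomatch h
  have hsplit : C.gates = C.gates.take (q+1) ++ C.gates.drop (q+1) := (List.take_append_drop _ _).symm
  have htake : C.gates.take (q+1) = C.gates.take q ++ [g] := by
    rw [List.take_succ, h]; rfl
  have hlen : (C.gates.take q).length = q := by simp [Nat.min_eq_left (le_of_lt hq)]
  have h1 : C.V x q = ((eAux x (C.gates.take (q+1))).getD q false) := by
    rw [Circuit.V, evalList_eq_eAux]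
    conv_lhs => rw [hsplit]
    exact eAux_prefix x _ _ q (by simp; omega)
  rw [h1, htake, eAux_concat, List.getD_append_right, length_eAux, hlen, Nat.sub_self]
  swap
  · simp [hlen]
  have hrefs : ∀ r ∈ g.refs, (eAux x (C.gates.take q)).getD r false = (C.evalList x).getD r false := by
    intro r hr
    have hrq : r < q := C.wf q g h r hr
    rw [evalList_eq_eAux]
    conv_rhs => rw [show C.gates = C.gates.take q ++ C.gates.drop q from (List.take_append_drop _ _).symm]
    rw [eAux_prefix x _ _ r (by omega)]
  simp only [List.getD_eq_getElem?_getD] at hrefs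
  cases g with
  | inp i => rfl
  | const b => rfl
  | not a => simp [Gate.val, hrefs a (by simp [Gate.refs])]
  | and a b => simp [Gate.val, hrefs a (by simp [Gate.refs]), hrefs b (by simp [Gate.refs])]
  | or a b => simp [Gate.val, hrefs a (by simp [Gate.refs]), hrefs b (by simp [Gate.refs])]

lemma Circuit.V_inp (C : Circuit n) (x : Fin n → Bool) {q : ℕ} {i : Fin n}
    (h : C.gates[q]? = some (.inp i)) : C.V x q = x i := by
  rw [C.V_rec x h]; rfl

lemma Circuit.V_constg (C : Circuit n) (x : Fin n → Bool) {q : ℕ} {b : Bool}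
    (h : C.gates[q]? = some (.const b)) : C.V x q = b := by
  rw [C.V_rec x h]; rfl

lemma Circuit.V_not (C : Circuit n) (x : Fin n → Bool) {q a : ℕ}
    (h : C.gates[q]? = some (.not a)) : C.V x q = !(C.V x a) := by
  rw [C.V_rec x h]; rfl

lemma Circuit.V_and (C : Circuit n) (x : Fin n → Bool) {q a b : ℕ}
    (h : C.gates[q]? = some (.and a b)) : C.V x q = (C.V x a && C.V x b) := by
  rw [C.V_rec x h]; rfl

lemma Circuit.V_or (C : Circuit n) (x : Fin n → Bool) {q a b : ℕ}
    (h : C.gates[q]? = some (.or a b)) : C.V x q = (C.V x a || C.V x b) := by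
  rw [C.V_rec x h]; rfl

end Basic
section Transforms

variable {n m : ℕ}

lemma countP_set' (P : α → Bool) : ∀ (l : List α) (p : ℕ) (a : α) (h : p < l.length),
    (l.set p a).countP P + (if P (l[p]'h) then 1 else 0)
      = l.countP P + (if P a then 1 else 0) := by
  intro l
  induction l with
  | nil => intro p a h; simp at h
  | cons hd tl ih =>
      intro p a h
      cases p with
      | zero => simp [List.countP_cons]; omega
      | succ p =>
          simp only [List.set_cons_succ, List.countP_cons, List.getElem_cons_succ]
          have := ih p a (by simpa using Nat.lt_of_succ_lt_succ h)
          omega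

lemma Circuit.size_eq_countP (C : Circuit n) : C.size = C.gates.countP Gate.costly :=
  List.countP_eq_length_filter.symm

def Gate.setC (i : Fin n) (c : Bool) : Gate n → Gate n
  | .inp j => if j = i then .const c else .inp j
  | g => g

lemma Gate.setC_refs (i : Fin n) (c : Bool) (g : Gate n) : (g.setC i c).refs = g.refs := by
  cases g with
  | inp j => simp only [Gate.setC]; split <;> rfl
  | const b => rfl
  | not a => rfl
  | and a b => rfl
  | or a b => rfl

lemma Gate.setC_costly (i : Fin n) (c : Bool) (g : Gate n) : (g.setC i c).costly = g.costly := by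
  cases g with
  | inp j => simp only [Gate.setC]; split <;> rfl
  | const b => rfl
  | not a => rfl
  | and a b => rfl
  | or a b => rfl

def Gate.ren (p b : ℕ) : Gate n → Gate n
  | .not a => .not (if a = p then b else a)
  | .and a a' => .and (if a = p then b else a) (if a' = p then b else a')
  | .or a a' => .or (if a = p then b else a) (if a' = p then b else a')
  | g => g

lemma Gate.ren_refs (p b : ℕ) (g : Gate n) :
    (g.ren p b).refs = g.refs.map (fun r => if r = p then b else r) := by
  cases g <;> simp [Gate.ren, Gate.refs]

lemma Gate.ren_costly (p b : ℕ) (g : Gate n) : (g.ren p b).costly = g.costly := by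
  cases g <;> simp [Gate.ren, Gate.costly]

/-- Map the gates of a circuit through a refs-preserving function. -/
def Circuit.mapGates (C : Circuit n) (f : Gate n → Gate m) (hf : ∀ g, (f g).refs = g.refs) :
    Circuit m where
  gates := C.gates.map f
  output := Fin.cast (by simp) C.output
  wf := by
    intro q g hg r hr
    rw [List.getElem?_map] at hg
    rcases Option.map_eq_some_iff.1 hg with ⟨g0, hg0, rfl⟩
    exact C.wf q g0 hg0 r (by rwa [hf] at hr)

lemma Circuit.mapGates_gates (C : Circuit n) (f : Gate n → Gate m) (hf) (q : ℕ) :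
    (C.mapGates f hf).gates[q]? = (C.gates[q]?).map f := by
  simp [Circuit.mapGates]

/-- Replace the gate at position `p` (keeping the output index). -/
def Circuit.setGate (C : Circuit n) (p : ℕ) (g : Gate n) (h : ∀ r ∈ g.refs, r < p) :
    Circuit n where
  gates := C.gates.set p g
  output := Fin.cast (by simp) C.output
  wf := by
    intro q g' hg' r hr
    rw [List.getElem?_set] at hg'
    by_cases hpq : p = q
    · subst hpq
      rw [if_pos rfl] at hg'
      by_cases hpl : p < C.gates.length
      · rw [if_pos hpl] at hg'; cases hg'; exact h r hr
      · rw [if_neg hpl] at hg'; exact absurd hg' (by simp)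
    · rw [if_neg hpq] at hg'
      exact C.wf q g' hg' r hr

lemma Circuit.setGate_gates (C : Circuit n) (p : ℕ) (g : Gate n) (h) (q : ℕ) :
    (C.setGate p g h).gates[q]? =
      if p = q then (if p < C.gates.length then some g else none) else C.gates[q]? := by
  simp [Circuit.setGate, List.getElem?_set]

end Transforms
section Concrete

variable {n m : ℕ}

lemma len_none {α : Type*} {l : List α} {q : ℕ} (h : l[q]? = none) : l.length ≤ q :=
  List.getElem?_eq_none_iff.1 h

/-! ### setConst -/

def Circuit.setConst (C : Circuit n) (i : Fin n) (c : Bool) : Circuit n :=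
  C.mapGates (Gate.setC i c) (Gate.setC_refs i c)

@[simp] lemma Circuit.setConst_len (C : Circuit n) (i c) :
    (C.setConst i c).gates.length = C.gates.length := by
  simp [Circuit.setConst, Circuit.mapGates]

lemma Circuit.setConst_gates (C : Circuit n) (i c) (q : ℕ) :
    (C.setConst i c).gates[q]? = (C.gates[q]?).map (Gate.setC i c) :=
  C.mapGates_gates _ _ q

@[simp] lemma Circuit.setConst_output (C : Circuit n) (i c) :
    ((C.setConst i c).output : ℕ) = (C.output : ℕ) := rfl

lemma Circuit.size_setConst (C : Circuit n) (i c) : (C.setConst i c).size = C.size := by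
  rw [Circuit.size_eq_countP, Circuit.size_eq_countP]
  show (C.gates.map (Gate.setC i c)).countP Gate.costly = _
  rw [List.countP_map]
  exact List.countP_congr (fun g _ => by simp [Function.comp, Gate.setC_costly i c g])

lemma Circuit.V_setConst (C : Circuit n) (i : Fin n) (c : Bool) :
    ∀ (q : ℕ) (x : Fin n → Bool),
      (C.setConst i c).V x q = C.V (Function.update x i c) q := by
  intro q
  induction q using Nat.strong_induction_on with
  | _ q ih =>
    intro x
    cases hg : C.gates[q]? with
    | none =>
        rw [Circuit.V_oob _ _ (by rw [Circuit.setConst_len]; exact len_none hg),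
          Circuit.V_oob _ _ (len_none hg)]
    | some g =>
        have hg' : (C.setConst i c).gates[q]? = some (g.setC i c) := by
          rw [Circuit.setConst_gates, hg]; rfl
        cases g with
        | inp j =>
            by_cases hj : j = i
            · subst hj
              rw [show Gate.setC j c (Gate.inp j) = Gate.const c by
                  simp [Gate.setC]] at hg'
              rw [Circuit.V_constg _ _ hg', Circuit.V_inp _ _ hg, Function.update_self]
            · rw [show Gate.setC i c (Gate.inp j) = Gate.inp j by
                  simp [Gate.setC, hj]] at hg'
              rw [Circuit.V_inp _ _ hg', Circuit.V_inp _ _ hg, Function.update_of_ne hj]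
        | const b => rw [Circuit.V_constg _ _ hg', Circuit.V_constg _ _ hg]
        | not a =>
            have ha : a < q := C.wf q _ hg a (by simp [Gate.refs])
            rw [Circuit.V_not _ _ hg', Circuit.V_not _ _ hg, ih a ha]
        | and a b =>
            have ha : a < q := C.wf q _ hg a (by simp [Gate.refs])
            have hb : b < q := C.wf q _ hg b (by simp [Gate.refs])
            rw [Circuit.V_and _ _ hg', Circuit.V_and _ _ hg, ih a ha, ih b hb]
        | or a b =>
            have ha : a < q := C.wf q _ hg a (by simp [Gate.refs])
            have hb : b < q := C.wf q _ hg b (by simp [Gate.refs])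
            rw [Circuit.V_or _ _ hg', Circuit.V_or _ _ hg, ih a ha, ih b hb]

/-! ### toConst -/

def Circuit.toConst (C : Circuit n) (p : ℕ) (v : Bool) : Circuit n :=
  C.setGate p (.const v) (by intro r hr; simp [Gate.refs] at hr)

@[simp] lemma Circuit.toConst_len (C : Circuit n) (p v) :
    (C.toConst p v).gates.length = C.gates.length := by
  simp [Circuit.toConst, Circuit.setGate]

lemma Circuit.toConst_gates (C : Circuit n) (p v) (q : ℕ) :
    (C.toConst p v).gates[q]? =
      if p = q then (if p < C.gates.length then some (.const v) else none)
      else C.gates[q]? :=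
  C.setGate_gates _ _ _ q

@[simp] lemma Circuit.toConst_output (C : Circuit n) (p v) :
    ((C.toConst p v).output : ℕ) = (C.output : ℕ) := rfl

lemma Circuit.V_toConst (C : Circuit n) {p : ℕ} {v : Bool} (hv : ∀ x, C.V x p = v) :
    ∀ (q : ℕ) (x : Fin n → Bool), (C.toConst p v).V x q = C.V x q := by
  intro q
  induction q using Nat.strong_induction_on with
  | _ q ih =>
    intro x
    by_cases hpq : p = q
    · subst hpq
      by_cases hpl : p < C.gates.length
      · have hg' : (C.toConst p v).gates[p]? = some (.const v) := by
          rw [Circuit.toConst_gates, if_pos rfl, if_pos hpl]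
        rw [Circuit.V_constg _ _ hg', hv x]
      · rw [Circuit.V_oob _ _ (by rw [Circuit.toConst_len]; omega),
          Circuit.V_oob _ _ (by omega)]
    · have hg' : (C.toConst p v).gates[q]? = C.gates[q]? := by
        rw [Circuit.toConst_gates, if_neg hpq]
      cases hg : C.gates[q]? with
      | none =>
          rw [Circuit.V_oob _ _ (by rw [Circuit.toConst_len]; exact len_none hg),
            Circuit.V_oob _ _ (len_none hg)]
      | some g =>
          rw [hg] at hg'
          cases g with
          | inp j => rw [Circuit.V_inp _ _ hg', Circuit.V_inp _ _ hg]
          | const b => rw [Circuit.V_constg _ _ hg', Circuit.V_constg _ _ hg]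
          | not a =>
              have ha : a < q := C.wf q _ hg a (by simp [Gate.refs])
              rw [Circuit.V_not _ _ hg', Circuit.V_not _ _ hg, ih a ha]
          | and a b =>
              have ha : a < q := C.wf q _ hg a (by simp [Gate.refs])
              have hb : b < q := C.wf q _ hg b (by simp [Gate.refs])
              rw [Circuit.V_and _ _ hg', Circuit.V_and _ _ hg, ih a ha, ih b hb]
          | or a b =>
              have ha : a < q := C.wf q _ hg a (by simp [Gate.refs])
              have hb : b < q := C.wf q _ hg b (by simp [Gate.refs])
              rw [Circuit.V_or _ _ hg', Circuit.V_or _ _ hg, ih a ha, ih b hb]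

lemma Circuit.eval_toConst (C : Circuit n) {p : ℕ} {v : Bool} (hv : ∀ x, C.V x p = v)
    (x : Fin n → Bool) : (C.toConst p v).eval x = C.eval x := by
  rw [Circuit.eval_eq_V, Circuit.eval_eq_V, Circuit.toConst_output,
    Circuit.V_toConst C hv]

lemma Circuit.size_toConst (C : Circuit n) {p : ℕ} (hp : p < C.gates.length)
    (hcost : (C.gates[p]'hp).costly = true) (v : Bool) :
    (C.toConst p v).size + 1 = C.size := by
  rw [Circuit.size_eq_countP, Circuit.size_eq_countP]
  have := countP_set' Gate.costly C.gates p (.const v) hp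
  rw [hcost] at this
  simpa [Gate.costly, Circuit.toConst, Circuit.setGate] using this

end Concrete
section Bypass

variable {n m : ℕ}

/-! ### bypass -/

def Circuit.bypass (C : Circuit n) (p b : ℕ) (hb : b < p) : Circuit n where
  gates := (C.gates.map (Gate.ren p b)).set p (.const false)
  output :=
    if h : (C.output : ℕ) = p then
      ⟨b, by simp only [List.length_set, List.length_map]; exact lt_of_lt_of_le hb (h ▸ le_of_lt C.output.isLt)⟩
    else ⟨C.output, by simp⟩
  wf := by
    intro q g hgq r hr
    rw [List.getElem?_set] at hgq
    by_cases hpq : p = q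
    · subst hpq
      rw [if_pos rfl] at hgq
      split at hgq
      · cases hgq; simp [Gate.refs] at hr
      · exact absurd hgq (by simp)
    · rw [if_neg hpq, List.getElem?_map] at hgq
      rcases Option.map_eq_some_iff.1 hgq with ⟨g0, hg0, rfl⟩
      rw [Gate.ren_refs] at hr
      rcases List.mem_map.1 hr with ⟨r0, hr0, rfl⟩
      have := C.wf q g0 hg0 r0 hr0
      split <;> omega

@[simp] lemma Circuit.bypass_len (C : Circuit n) (p b hb) :
    (C.bypass p b hb).gates.length = C.gates.length := by
  simp [Circuit.bypass]

lemma Circuit.bypass_gates (C : Circuit n) (p b hb) (q : ℕ) (hq : q ≠ p) :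
    (C.bypass p b hb).gates[q]? = (C.gates[q]?).map (Gate.ren p b) := by
  show ((C.gates.map (Gate.ren p b)).set p (.const false))[q]? = _
  rw [List.getElem?_set, if_neg (fun h => hq h.symm), List.getElem?_map]

lemma Circuit.size_bypass (C : Circuit n) {p : ℕ} (b hb) (hp : p < C.gates.length)
    (hcost : (C.gates[p]'hp).costly = true) :
    (C.bypass p b hb).size + 1 = C.size := by
  rw [Circuit.size_eq_countP, Circuit.size_eq_countP]
  show ((C.gates.map (Gate.ren p b)).set p (.const false)).countP Gate.costly + 1 = _
  have h1 := countP_set' Gate.costly (C.gates.map (Gate.ren p b)) p (.const false)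
    (by simpa using hp)
  rw [List.getElem_map] at h1
  rw [Gate.ren_costly, hcost] at h1
  have h2 : (C.gates.map (Gate.ren p b)).countP Gate.costly = C.gates.countP Gate.costly := by
    rw [List.countP_map]
    exact List.countP_congr (fun g _ => by simp [Function.comp, Gate.ren_costly])
  have h3 : ((Gate.const false : Gate n).costly) = false := rfl
  rw [h2, h3] at h1
  simpa using h1

lemma Circuit.V_bypass (C : Circuit n) {p b : ℕ} {hb : b < p}
    (hv : ∀ x, C.V x b = C.V x p) :
    ∀ (q : ℕ), q ≠ p → ∀ x, (C.bypass p b hb).V x q = C.V x q := by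
  intro q
  induction q using Nat.strong_induction_on with
  | _ q ih =>
    intro hqp x
    cases hg : C.gates[q]? with
    | none =>
        rw [Circuit.V_oob _ _ (by rw [Circuit.bypass_len]; exact len_none hg),
          Circuit.V_oob _ _ (len_none hg)]
    | some g =>
        have hg' : (C.bypass p b hb).gates[q]? = some (g.ren p b) := by
          rw [Circuit.bypass_gates _ _ _ _ _ hqp, hg]; rfl
        have key : ∀ a, a < q → (C.bypass p b hb).V x (if a = p then b else a) = C.V x a := by
          intro a ha
          by_cases hap : a = p
          · subst hap
            rw [if_pos rfl, ih b (lt_trans hb ha) (Nat.ne_of_lt hb) x, hv x]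
          · rw [if_neg hap, ih a ha hap x]
        cases g with
        | inp j => rw [Circuit.V_inp _ _ hg', Circuit.V_inp _ _ hg]
        | const c => rw [Circuit.V_constg _ _ hg', Circuit.V_constg _ _ hg]
        | not a =>
            have ha : a < q := C.wf q _ hg a (by simp [Gate.refs])
            rw [show (Gate.not a : Gate n).ren p b = .not (if a = p then b else a) from rfl] at hg'
            rw [Circuit.V_not _ _ hg', Circuit.V_not _ _ hg, key a ha]
        | and a1 a2 =>
            have h1 : a1 < q := C.wf q _ hg a1 (by simp [Gate.refs])
            have h2 : a2 < q := C.wf q _ hg a2 (by simp [Gate.refs])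
            rw [show (Gate.and a1 a2 : Gate n).ren p b
                = .and (if a1 = p then b else a1) (if a2 = p then b else a2) from rfl] at hg'
            rw [Circuit.V_and _ _ hg', Circuit.V_and _ _ hg, key a1 h1, key a2 h2]
        | or a1 a2 =>
            have h1 : a1 < q := C.wf q _ hg a1 (by simp [Gate.refs])
            have h2 : a2 < q := C.wf q _ hg a2 (by simp [Gate.refs])
            rw [show (Gate.or a1 a2 : Gate n).ren p b
                = .or (if a1 = p then b else a1) (if a2 = p then b else a2) from rfl] at hg'
            rw [Circuit.V_or _ _ hg', Circuit.V_or _ _ hg, key a1 h1, key a2 h2]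

lemma Circuit.eval_bypass (C : Circuit n) {p b : ℕ} {hb : b < p}
    (hv : ∀ x, C.V x b = C.V x p) (x : Fin n → Bool) :
    (C.bypass p b hb).eval x = C.eval x := by
  rw [Circuit.eval_eq_V, Circuit.eval_eq_V]
  show (C.bypass p b hb).V x ((C.bypass p b hb).output : ℕ) = _
  by_cases h : (C.output : ℕ) = p
  · have : ((C.bypass p b hb).output : ℕ) = b := by simp [Circuit.bypass, h]
    rw [this, Circuit.V_bypass C hv b (Nat.ne_of_lt hb) x, hv x, h]
  · have : ((C.bypass p b hb).output : ℕ) = (C.output : ℕ) := by simp [Circuit.bypass, h]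
    rw [this, Circuit.V_bypass C hv _ h x]

/-! ### contract -/

noncomputable def Gate.con (i : Fin (m+1)) (c : Bool) : Gate (m+1) → Gate m
  | .inp j =>
      if h : j = i then .const c
      else .inp (Classical.choose (Fin.exists_succAbove_eq h))
  | .const b => .const b
  | .not a => .not a
  | .and a1 a2 => .and a1 a2
  | .or a1 a2 => .or a1 a2

lemma Gate.con_refs (i : Fin (m+1)) (c : Bool) (g : Gate (m+1)) :
    (Gate.con i c g).refs = g.refs := by
  cases g with
  | inp j => simp only [Gate.con]; split <;> rfl
  | const b => rfl
  | not a => rfl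
  | and a1 a2 => rfl
  | or a1 a2 => rfl

lemma Gate.con_costly (i : Fin (m+1)) (c : Bool) (g : Gate (m+1)) :
    (Gate.con i c g).costly = g.costly := by
  cases g with
  | inp j => simp only [Gate.con]; split <;> rfl
  | const b => rfl
  | not a => rfl
  | and a1 a2 => rfl
  | or a1 a2 => rfl

noncomputable def Circuit.contract (C : Circuit (m+1)) (i : Fin (m+1)) (c : Bool) : Circuit m :=
  C.mapGates (Gate.con i c) (Gate.con_refs i c)

@[simp] lemma Circuit.contract_len (C : Circuit (m+1)) (i c) :
    (C.contract i c).gates.length = C.gates.length := by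
  simp [Circuit.contract, Circuit.mapGates]

lemma Circuit.size_contract (C : Circuit (m+1)) (i c) : (C.contract i c).size = C.size := by
  rw [Circuit.size_eq_countP, Circuit.size_eq_countP]
  show (C.gates.map (Gate.con i c)).countP Gate.costly = _
  rw [List.countP_map]
  exact List.countP_congr (fun g _ => by simp [Function.comp, Gate.con_costly])

lemma Circuit.V_contract (C : Circuit (m+1)) (i : Fin (m+1)) (c : Bool) :
    ∀ (q : ℕ) (y : Fin m → Bool),
      (C.contract i c).V y q = C.V (i.insertNth c y) q := by
  intro q
  induction q using Nat.strong_induction_on with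
  | _ q ih =>
    intro y
    cases hg : C.gates[q]? with
    | none =>
        rw [Circuit.V_oob _ _ (by rw [Circuit.contract_len]; exact len_none hg),
          Circuit.V_oob _ _ (len_none hg)]
    | some g =>
        have hg' : (C.contract i c).gates[q]? = some (Gate.con i c g) := by
          rw [Circuit.contract, C.mapGates_gates, hg]; rfl
        cases g with
        | inp j =>
            by_cases hj : j = i
            · subst hj
              rw [show Gate.con j c (Gate.inp j) = Gate.const c by simp [Gate.con]] at hg'
              rw [Circuit.V_constg _ _ hg', Circuit.V_inp _ _ hg, Fin.insertNth_apply_same]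
            · rw [show Gate.con i c (Gate.inp j)
                  = Gate.inp (Classical.choose (Fin.exists_succAbove_eq hj)) by
                  simp [Gate.con, hj]] at hg'
              rw [Circuit.V_inp _ _ hg', Circuit.V_inp _ _ hg]
              have hspec := Classical.choose_spec (Fin.exists_succAbove_eq hj)
              have h2 : (i.insertNth c y : Fin (m+1) → Bool)
                  (i.succAbove (Classical.choose (Fin.exists_succAbove_eq hj)))
                  = y (Classical.choose (Fin.exists_succAbove_eq hj)) := by
                simp
              rw [hspec] at h2
              exact h2.symm
        | const b => rw [Circuit.V_constg _ _ hg', Circuit.V_constg _ _ hg]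
        | not a =>
            have ha : a < q := C.wf q _ hg a (by simp [Gate.refs])
            rw [Circuit.V_not _ _ hg', Circuit.V_not _ _ hg, ih a ha]
        | and a1 a2 =>
            have h1 : a1 < q := C.wf q _ hg a1 (by simp [Gate.refs])
            have h2 : a2 < q := C.wf q _ hg a2 (by simp [Gate.refs])
            rw [Circuit.V_and _ _ hg', Circuit.V_and _ _ hg, ih a1 h1, ih a2 h2]
        | or a1 a2 =>
            have h1 : a1 < q := C.wf q _ hg a1 (by simp [Gate.refs])
            have h2 : a2 < q := C.wf q _ hg a2 (by simp [Gate.refs])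
            rw [Circuit.V_or _ _ hg', Circuit.V_or _ _ hg, ih a1 h1, ih a2 h2]

lemma Circuit.eval_contract (C : Circuit (m+1)) (i : Fin (m+1)) (c : Bool) (y : Fin m → Bool) :
    (C.contract i c).eval y = C.eval (i.insertNth c y) := by
  rw [Circuit.eval_eq_V, Circuit.eval_eq_V]
  exact C.V_contract i c _ y

/-! ### appendNot -/

def Circuit.appendNot (C : Circuit n) : Circuit n where
  gates := C.gates ++ [.not C.output]
  output := ⟨C.gates.length, by simp⟩
  wf := by
    intro q g hg r hr
    rcases lt_trichotomy q C.gates.length with h | h | h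
    · rw [List.getElem?_append, if_pos h] at hg
      exact C.wf q g hg r hr
    · subst h
      rw [List.getElem?_append_right (le_refl _)] at hg
      simp at hg
      subst hg
      simp [Gate.refs] at hr
      subst hr
      exact C.output.isLt
    · rw [List.getElem?_eq_none (by simp; omega)] at hg
      exact absurd hg (by simp)

lemma Circuit.V_appendNot (C : Circuit n) (q : ℕ) (hq : q < C.gates.length)
    (x : Fin n → Bool) : C.appendNot.V x q = C.V x q := by
  show (eAux x (C.gates ++ [.not C.output])).getD q false = _
  rw [eAux_prefix x _ _ q hq]; rfl

lemma Circuit.eval_appendNot (C : Circuit n) (x : Fin n → Bool) :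
    C.appendNot.eval x = !(C.eval x) := by
  rw [Circuit.eval_eq_V]
  have hg : C.appendNot.gates[C.gates.length]? = some (.not C.output) := by
    show (C.gates ++ [Gate.not C.output])[C.gates.length]? = _
    rw [List.getElem?_append_right (le_refl _)]
    simp
  rw [show ((C.appendNot.output : ℕ)) = C.gates.length from rfl, Circuit.V_not _ _ hg,
    C.V_appendNot _ C.output.isLt, Circuit.eval_eq_V]

lemma Circuit.size_appendNot (C : Circuit n) : C.appendNot.size = C.size := by
  simp [Circuit.size, Circuit.appendNot, List.filter_append, Gate.costly]

end Bypass
section Reach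

variable {n : ℕ}

inductive Circuit.Reaches (C : Circuit n) (u : ℕ) : ℕ → Prop where
  | refl : Circuit.Reaches C u u
  | step {q r : ℕ} {g : Gate n} : Circuit.Reaches C u q → C.gates[q]? = some g →
      r ∈ g.refs → Circuit.Reaches C u r

def ConstAt (C : Circuit n) (p : ℕ) : Prop := ∃ b, ∀ x, C.V x p = b

def CostlyAt (C : Circuit n) (p : ℕ) : Prop :=
  ∃ g, C.gates[p]? = some g ∧ g.costly = true

def HasConstRef (C : Circuit n) (p : ℕ) : Prop :=
  ∃ g, C.gates[p]? = some g ∧ ∃ r ∈ g.refs, ConstAt C r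

lemma CostlyAt.one_le_size {C : Circuit n} {p : ℕ} (h : CostlyAt C p) : 1 ≤ C.size := by
  obtain ⟨g, hg, hc⟩ := h
  rw [Circuit.size_eq_countP]
  refine List.countP_pos_iff.2 ⟨g, ?_, hc⟩
  exact List.mem_of_getElem? hg

/-- Eliminating a dead (unreachable) gate. -/
lemma Circuit.V_toConst_dead (C : Circuit n) {p : ℕ} (hdead : ¬ C.Reaches C.output p) :
    ∀ q, C.Reaches C.output q → ∀ x, (C.toConst p false).V x q = C.V x q := by
  intro q
  induction q using Nat.strong_induction_on with
  | _ q ih =>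
    intro hq x
    have hqp : p ≠ q := fun h => hdead (h ▸ hq)
    have hg' : (C.toConst p false).gates[q]? = C.gates[q]? := by
      rw [Circuit.toConst_gates, if_neg hqp]
    cases hg : C.gates[q]? with
    | none =>
        rw [Circuit.V_oob _ _ (by rw [Circuit.toConst_len]; exact len_none hg),
          Circuit.V_oob _ _ (len_none hg)]
    | some g =>
        rw [hg] at hg'
        have hrec : ∀ r ∈ g.refs, (C.toConst p false).V x r = C.V x r := fun r hr =>
          ih r (C.wf q g hg r hr) (Circuit.Reaches.step hq hg hr) x
        cases g with
        | inp j => rw [Circuit.V_inp _ _ hg', Circuit.V_inp _ _ hg]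
        | const b => rw [Circuit.V_constg _ _ hg', Circuit.V_constg _ _ hg]
        | not a =>
            rw [Circuit.V_not _ _ hg', Circuit.V_not _ _ hg, hrec a (by simp [Gate.refs])]
        | and a1 a2 =>
            rw [Circuit.V_and _ _ hg', Circuit.V_and _ _ hg,
              hrec a1 (by simp [Gate.refs]), hrec a2 (by simp [Gate.refs])]
        | or a1 a2 =>
            rw [Circuit.V_or _ _ hg', Circuit.V_or _ _ hg,
              hrec a1 (by simp [Gate.refs]), hrec a2 (by simp [Gate.refs])]

lemma Circuit.eval_toConst_dead (C : Circuit n) {p : ℕ} (hdead : ¬ C.Reaches C.output p)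
    (x : Fin n → Bool) : (C.toConst p false).eval x = C.eval x := by
  rw [Circuit.eval_eq_V, Circuit.eval_eq_V, Circuit.toConst_output]
  exact C.V_toConst_dead hdead _ Circuit.Reaches.refl x

/-- The path-search lemma: on any path from a non-constant node `u` down to a constant
node `w` (with syntactic invariant `N`), there is a costly gate with a constant ref. -/
lemma pathfind (D : Circuit n) (N : ℕ → Prop)
    (hN : ∀ q w, D.gates[q]? = some (.not w) → N w → N q) :
    ∀ u w : ℕ, D.Reaches u w → N w → ConstAt D w → ¬ ConstAt D u →
    ∃ k gk r, D.gates[k]? = some gk ∧ gk.costly = true ∧ r ∈ gk.refs ∧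
      ConstAt D r ∧ N r ∧ w ≤ r ∧ r < k := by
  intro u w hp
  induction hp with
  | refl => intro _ hwc hu; exact absurd hwc hu
  | @step q r g hpq hgq href ih =>
      intro hr hrc hu
      by_cases hc : g.costly = true
      · exact ⟨q, g, r, hgq, hc, href, hrc, hr, le_refl r, D.wf q g hgq r href⟩
      · have hgnot : g = .not r := by
          cases g with
          | inp j => simp [Gate.refs] at href
          | const b => simp [Gate.refs] at href
          | not a => simp [Gate.refs] at href; rw [href]
          | and a1 a2 => simp [Gate.costly] at hc
          | or a1 a2 => simp [Gate.costly] at hc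
        subst hgnot
        have hNq : N q := hN q r hgq hr
        have hqc : ConstAt D q := by
          obtain ⟨bb, hbb⟩ := hrc
          exact ⟨!bb, fun x => by rw [D.V_not x hgq, hbb]⟩
        obtain ⟨k, gk, r', h1, h2, h3, h4, h5, h6, h7⟩ := ih hNq hqc hu
        exact ⟨k, gk, r', h1, h2, h3, h4, h5,
          le_trans (le_of_lt (D.wf q _ hgq r href)) h6, h7⟩

/-- One gate-elimination step. -/
lemma elim_one (C : Circuit n) {p : ℕ} (hp : CostlyAt C p)
    (hred : ConstAt C p ∨ ∃ r, r < p ∧ (∀ x, C.V x r = C.V x p)) :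
    ∃ C' : Circuit n,
      (∀ x, C'.eval x = C.eval x) ∧
      C'.size + 1 = C.size ∧
      (∀ q, q ≠ p → (CostlyAt C' q ↔ CostlyAt C q)) ∧
      (∀ q, q ≠ p → HasConstRef C q → HasConstRef C' q) := by
  obtain ⟨g, hg, hcost⟩ := hp
  have hplen : p < C.gates.length := by
    by_contra h
    rw [List.getElem?_eq_none (by omega)] at hg
    exact nomatch hg
  have hgelem : C.gates[p]'hplen = g := by
    have := List.getElem?_eq_getElem hplen
    rw [hg] at this
    exact (Option.some.injEq _ _ ▸ this.symm :)
  by_cases hconst : ConstAt C p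
  · obtain ⟨v, hv⟩ := hconst
    refine ⟨C.toConst p v, fun x => C.eval_toConst hv x, ?_, ?_, ?_⟩
    · exact C.size_toConst hplen (by rw [hgelem]; exact hcost) v
    · intro q hq
      have : (C.toConst p v).gates[q]? = C.gates[q]? := by
        rw [Circuit.toConst_gates, if_neg (fun h => hq h.symm)]
      unfold CostlyAt
      rw [this]
    · intro q hq ⟨g0, hg0, r, hr, bb, hbb⟩
      refine ⟨g0, ?_, r, hr, bb, fun x => ?_⟩
      · rw [Circuit.toConst_gates, if_neg (fun h => hq h.symm)]; exact hg0
      · rw [Circuit.V_toConst C hv r x]; exact hbb x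
  · obtain ⟨b, hb, hbv⟩ := hred.resolve_left hconst
    refine ⟨C.bypass p b hb, fun x => C.eval_bypass hbv x, ?_, ?_, ?_⟩
    · exact C.size_bypass b hb hplen (by rw [hgelem]; exact hcost)
    · intro q hq
      constructor
      · rintro ⟨g0, hg0, hc0⟩
        rw [Circuit.bypass_gates _ _ _ _ _ hq] at hg0
        rcases Option.map_eq_some_iff.1 hg0 with ⟨g1, hg1, rfl⟩
        exact ⟨g1, hg1, by rwa [Gate.ren_costly] at hc0⟩
      · rintro ⟨g0, hg0, hc0⟩
        refine ⟨g0.ren p b, ?_, by rwa [Gate.ren_costly]⟩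
        rw [Circuit.bypass_gates _ _ _ _ _ hq, hg0]; rfl
    · rintro q hq ⟨g0, hg0, r, hr, bb, hbb⟩
      have hrp : r ≠ p := by
        intro h
        exact hconst ⟨bb, h ▸ hbb⟩
      refine ⟨g0.ren p b, ?_, r, ?_, bb, fun x => ?_⟩
      · rw [Circuit.bypass_gates _ _ _ _ _ hq, hg0]; rfl
      · rw [Gate.ren_refs]
        exact List.mem_map.2 ⟨r, hr, if_neg hrp⟩
      · rw [Circuit.V_bypass C hbv r hrp x]; exact hbb x

/-- Deriving the elimination hypothesis from a constant ref. -/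
lemma red_of_hcr {C : Circuit n} {p : ℕ} (hp : CostlyAt C p) (h : HasConstRef C p) :
    ConstAt C p ∨ ∃ r, r < p ∧ (∀ x, C.V x r = C.V x p) := by
  obtain ⟨g, hg, r, hr, bb, hbb⟩ := h
  obtain ⟨g', hg', hcost⟩ := hp
  rw [hg] at hg'
  cases hg'
  cases g with
  | inp j => simp [Gate.costly] at hcost
  | const c => simp [Gate.costly] at hcost
  | not a => simp [Gate.costly] at hcost
  | and a1 a2 =>
      have h1 : a1 < p := C.wf p _ hg a1 (by simp [Gate.refs])
      have h2 : a2 < p := C.wf p _ hg a2 (by simp [Gate.refs])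
      simp [Gate.refs] at hr
      rcases hr with rfl | rfl
      · cases bb
        · exact Or.inl ⟨false, fun x => by rw [C.V_and x hg, hbb x]; rfl⟩
        · exact Or.inr ⟨a2, h2, fun x => by rw [C.V_and x hg, hbb x]; rfl⟩
      · cases bb
        · exact Or.inl ⟨false, fun x => by rw [C.V_and x hg, hbb x]; simp⟩
        · exact Or.inr ⟨a1, h1, fun x => by rw [C.V_and x hg, hbb x]; simp⟩
  | or a1 a2 =>
      have h1 : a1 < p := C.wf p _ hg a1 (by simp [Gate.refs])
      have h2 : a2 < p := C.wf p _ hg a2 (by simp [Gate.refs])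
      simp [Gate.refs] at hr
      rcases hr with rfl | rfl
      · cases bb
        · exact Or.inr ⟨a2, h2, fun x => by rw [C.V_or x hg, hbb x]; rfl⟩
        · exact Or.inl ⟨true, fun x => by rw [C.V_or x hg, hbb x]; rfl⟩
      · cases bb
        · exact Or.inr ⟨a1, h1, fun x => by rw [C.V_or x hg, hbb x]; simp⟩
        · exact Or.inl ⟨true, fun x => by rw [C.V_or x hg, hbb x]; simp⟩

lemma elim_many (S : Finset ℕ) :
    ∀ (C : Circuit n) (f : (Fin n → Bool) → Bool),
      (∀ p ∈ S, CostlyAt C p ∧ HasConstRef C p) → C.Computes f →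
      ∃ C' : Circuit n, C'.Computes f ∧ C'.size + S.card ≤ C.size := by
  induction S using Finset.induction_on with
  | empty => intro C f _ hC; exact ⟨C, hC, by simp⟩
  | @insert p S hpS ih =>
      intro C f hS hC
      have hp := hS p (Finset.mem_insert_self p S)
      obtain ⟨C1, hev, hsz, hcos, hhcr⟩ := elim_one C hp.1 (red_of_hcr hp.1 hp.2)
      have hq : ∀ q ∈ S, CostlyAt C1 q ∧ HasConstRef C1 q := by
        intro q hqS
        have hqp : q ≠ p := fun h => hpS (h ▸ hqS)
        have := hS q (Finset.mem_insert_of_mem hqS)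
        exact ⟨(hcos q hqp).2 this.1, hhcr q hqp this.2⟩
      obtain ⟨C2, hC2, hsz2⟩ := ih C1 f hq (fun x => (hev x).trans (hC x))
      refine ⟨C2, hC2, ?_⟩
      rw [Finset.card_insert_of_notMem hpS]
      omega

end Reach
section Lit

variable {n : ℕ}

/-- Syntactic source of a literal: follow `not`-chains up from node `q`. -/
def litSrc (C : Circuit n) (q : ℕ) : Option (Fin n × Bool) :=
  match C.gates[q]? with
  | some (.inp i) => some (i, true)
  | some (.not a) =>
      if ha : a < q then (litSrc C a).map (fun p => (p.1, !p.2)) else none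
  | _ => none
termination_by q
decreasing_by exact ha

lemma litSrc_inp {C : Circuit n} {q : ℕ} {i : Fin n} (h : C.gates[q]? = some (.inp i)) :
    litSrc C q = some (i, true) := by
  unfold litSrc; rw [h]

lemma litSrc_not {C : Circuit n} {q a : ℕ} (h : C.gates[q]? = some (.not a)) (ha : a < q) :
    litSrc C q = (litSrc C a).map (fun p => (p.1, !p.2)) := by
  conv_lhs => rw [litSrc]
  rw [h]
  exact dif_pos ha

lemma litSrc_const {C : Circuit n} {q : ℕ} {b : Bool} (h : C.gates[q]? = some (.const b)) :
    litSrc C q = none := by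
  unfold litSrc; rw [h]

lemma litSrc_and {C : Circuit n} {q a1 a2 : ℕ} (h : C.gates[q]? = some (.and a1 a2)) :
    litSrc C q = none := by
  unfold litSrc; rw [h]

lemma litSrc_or {C : Circuit n} {q a1 a2 : ℕ} (h : C.gates[q]? = some (.or a1 a2)) :
    litSrc C q = none := by
  unfold litSrc; rw [h]

lemma litSrc_none {C : Circuit n} {q : ℕ} (h : C.gates[q]? = none) :
    litSrc C q = none := by
  unfold litSrc; rw [h]

lemma litSrc_val {C : Circuit n} :
    ∀ (q : ℕ) (i : Fin n) (s : Bool), litSrc C q = some (i, s) →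
      ∀ x, C.V x q = (if s then x i else !(x i)) := by
  intro q
  induction q using Nat.strong_induction_on with
  | _ q ih =>
    intro i s h x
    cases hg : C.gates[q]? with
    | none => rw [litSrc_none hg] at h; exact nomatch h
    | some g =>
        cases g with
        | inp j =>
            rw [litSrc_inp hg] at h
            cases h
            rw [Circuit.V_inp _ _ hg]; rfl
        | const b => rw [litSrc_const hg] at h; exact nomatch h
        | not a =>
            have ha : a < q := C.wf q _ hg a (by simp [Gate.refs])
            rw [litSrc_not hg ha] at h
            rcases Option.map_eq_some_iff.1 h with ⟨⟨i0, s0⟩, ha0, heq⟩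
            simp only [Prod.mk.injEq] at heq
            obtain ⟨rfl, hs⟩ := heq
            have := ih a ha i0 s0 ha0 x
            rw [Circuit.V_not _ _ hg, this, ← hs]
            cases s0 <;> simp
        | and a1 a2 => rw [litSrc_and hg] at h; exact nomatch h
        | or a1 a2 => rw [litSrc_or hg] at h; exact nomatch h

/-- Below the first costly gate, every node is a literal or a constant. -/
lemma litOrConst (C : Circuit n) :
    ∀ q : ℕ, (∀ r, r ≤ q → ¬ CostlyAt C r) →
      (∃ l, litSrc C q = some l) ∨ ConstAt C q := by
  intro q
  induction q using Nat.strong_induction_on with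
  | _ q ih =>
    intro hnc
    cases hg : C.gates[q]? with
    | none => exact Or.inr ⟨false, fun x => C.V_oob x (len_none hg)⟩
    | some g =>
        cases g with
        | inp i => exact Or.inl ⟨(i, true), litSrc_inp hg⟩
        | const b => exact Or.inr ⟨b, fun x => C.V_constg x hg⟩
        | not a =>
            have ha : a < q := C.wf q _ hg a (by simp [Gate.refs])
            rcases ih a ha (fun r hr => hnc r (by omega)) with ⟨⟨i, s⟩, hl⟩ | ⟨b, hb⟩
            · exact Or.inl ⟨(i, !s), by rw [litSrc_not hg ha, hl]; rfl⟩
            · exact Or.inr ⟨!b, fun x => by rw [Circuit.V_not _ _ hg, hb x]⟩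
        | and a1 a2 => exact absurd ⟨_, hg, rfl⟩ (hnc q (le_refl q))
        | or a1 a2 => exact absurd ⟨_, hg, rfl⟩ (hnc q (le_refl q))

end Lit

section XorLemmas

variable {n : ℕ}

def zsum (x : Fin n → Bool) : ZMod 2 := ∑ i, (if x i then 1 else 0)

lemma parity_decide (S : ℕ) : decide (S % 2 = 1) = decide ((S : ZMod 2) = 1) := by
  have hc : ((S:ℕ) : ZMod 2) = ((S % 2 :ℕ) : ZMod 2) := (ZMod.natCast_mod S 2).symm
  rw [hc]
  rcases Nat.mod_two_eq_zero_or_one S with h | h <;> rw [h] <;> decide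

lemma cast_sum_ite (x : Fin n → Bool) :
    (((∑ i : Fin n, (if x i then (1:ℕ) else 0)) : ℕ) : ZMod 2) = zsum x := by
  unfold zsum
  rw [Nat.cast_sum]
  exact Finset.sum_congr rfl (fun i _ => by split <;> simp)

lemma XORf_eq_zsum (x : Fin n → Bool) : XORf n x = decide (zsum x = 1) := by
  unfold XORf
  rw [parity_decide, cast_sum_ite]

lemma zsum_update (x : Fin n → Bool) (i : Fin n) (b : Bool) :
    zsum (Function.update x i b)
      = zsum x + (if b then 1 else 0) + (if x i then 1 else 0) := by
  classical
  have hfun : (fun j => if Function.update x i b j then (1:ZMod 2) else 0)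
      = Function.update (fun j => if x j then (1:ZMod 2) else 0) i (if b then 1 else 0) := by
    funext j
    by_cases hj : j = i
    · subst hj; simp
    · simp [Function.update_of_ne hj]
  have h1 : zsum (Function.update x i b)
      = (if b then (1:ZMod 2) else 0)
        + ∑ j ∈ Finset.univ \ {i}, (if x j then (1:ZMod 2) else 0) := by
    unfold zsum
    rw [show (∑ j : Fin n, (if Function.update x i b j then (1:ZMod 2) else 0))
        = ∑ j : Fin n, Function.update (fun j => if x j then (1:ZMod 2) else 0) i
            (if b then 1 else 0) j from by rw [← hfun]]
    exact Finset.sum_update_of_mem (Finset.mem_univ i) (fun j => if x j then (1:ZMod 2) else 0) (if b then 1 else 0)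
  have h2 : zsum x
      = (if x i then (1:ZMod 2) else 0)
        + ∑ j ∈ Finset.univ \ {i}, (if x j then (1:ZMod 2) else 0) := by
    unfold zsum
    exact Finset.sum_eq_add_sum_sdiff_singleton_of_mem (Finset.mem_univ i)
      (fun j => if x j then (1:ZMod 2) else 0)
  set eb : ZMod 2 := if b then 1 else 0
  set exi : ZMod 2 := if x i then 1 else 0
  set T : ZMod 2 := ∑ j ∈ Finset.univ \ {i}, (if x j then (1:ZMod 2) else 0)
  have hz : ∀ z : ZMod 2, z + z = 0 := by decide
  rw [h1, h2, show exi + T + eb + exi = eb + T + (exi + exi) by ring, hz, add_zero]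

lemma XORf_update (x : Fin n → Bool) (i : Fin n) (b : Bool) :
    XORf n (Function.update x i b) = xor (xor b (x i)) (XORf n x) := by
  rw [XORf_eq_zsum, XORf_eq_zsum, zsum_update]
  have f1 : ∀ z : ZMod 2, decide (z + 1 + 1 = 1) = decide (z = 1) := by decide
  have f2 : ∀ z : ZMod 2, decide (z + 1 + 0 = 1) = !decide (z = 1) := by decide
  have f3 : ∀ z : ZMod 2, decide (z + 0 + 1 = 1) = !decide (z = 1) := by decide
  have f4 : ∀ z : ZMod 2, decide (z + 0 + 0 = 1) = decide (z = 1) := by decide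
  have f5 : ∀ z : ZMod 2, decide (z = 0) = !decide (z = 1) := by decide
  have f6 : ∀ z : ZMod 2, (z + 1 = 0) ↔ (z = 1) := by decide
  cases b <;> cases hxi : x i <;>
    simp [f1, f2, f3, f4, f5, f6]

lemma XORf_flip (x : Fin n → Bool) (i : Fin n) :
    XORf n (Function.update x i (!x i)) = !(XORf n x) := by
  rw [XORf_update]
  cases x i <;> simp

lemma XORf_insertNth {m : ℕ} (i : Fin (m+1)) (c : Bool) (y : Fin m → Bool) :
    XORf (m+1) (i.insertNth c y) = xor c (XORf m y) := by
  rw [XORf_eq_zsum, XORf_eq_zsum]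
  have hs : zsum (i.insertNth c y : Fin (m+1) → Bool)
      = (if c then 1 else 0) + zsum y := by
    unfold zsum
    rw [Fin.sum_univ_succAbove (fun j => if (i.insertNth c y : Fin (m+1) → Bool) j
        then (1:ZMod 2) else 0) i]
    congr 1
    · simp
    · exact Finset.sum_congr rfl (fun j _ => by
        have : (i.insertNth c y : Fin (m+1) → Bool) (i.succAbove j) = y j := by simp
        rw [this])
  rw [hs]
  have f1 : ∀ z : ZMod 2, decide (1 + z = 1) = !decide (z = 1) := by decide
  have f2 : ∀ z : ZMod 2, decide (0 + z = 1) = decide (z = 1) := by decide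
  have f5 : ∀ z : ZMod 2, decide (z = 0) = !decide (z = 1) := by decide
  cases c <;> simp [f1, f2, f5]

end XorLemmas
section Helpers

variable {n : ℕ}

lemma lt_len_of_some {α : Type*} {l : List α} {q : ℕ} {g : α} (hg : l[q]? = some g) :
    q < l.length := by
  by_contra h
  rw [List.getElem?_eq_none (by omega)] at hg
  exact nomatch hg

lemma CostlyAt.size_toConst' {C : Circuit n} {p : ℕ} (hp : CostlyAt C p) (v : Bool) :
    (C.toConst p v).size + 1 = C.size := by
  obtain ⟨g, hg, hc⟩ := hp
  have hplen : p < C.gates.length := lt_len_of_some hg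
  have he : C.gates[p]'hplen = g := by
    have := List.getElem?_eq_getElem hplen
    rw [hg] at this
    exact (Option.some.inj this).symm
  exact C.size_toConst hplen (he ▸ hc) v

lemma Gate.setC_eq_of_costly {i : Fin n} {c : Bool} {g : Gate n} (hc : g.costly = true) :
    g.setC i c = g := by
  cases g with
  | inp j => simp [Gate.costly] at hc
  | const b => rfl
  | not a => rfl
  | and a1 a2 => rfl
  | or a1 a2 => rfl

lemma Gate.costly_shape {g : Gate n} (hc : g.costly = true) :
    ∃ b1 b2, g.refs = [b1, b2] := by
  cases g with
  | inp j => simp [Gate.costly] at hc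
  | const b => simp [Gate.costly] at hc
  | not a => simp [Gate.costly] at hc
  | and a1 a2 => exact ⟨a1, a2, rfl⟩
  | or a1 a2 => exact ⟨a1, a2, rfl⟩

lemma litSrc_none_of_costly {C : Circuit n} {q : ℕ} {g : Gate n}
    (hg : C.gates[q]? = some g) (hc : g.costly = true) : litSrc C q = none := by
  cases g with
  | inp j => simp [Gate.costly] at hc
  | const b => simp [Gate.costly] at hc
  | not a => simp [Gate.costly] at hc
  | and a1 a2 => exact litSrc_and hg
  | or a1 a2 => exact litSrc_or hg

lemma ConstAt_of_refs_const {C : Circuit n} {q : ℕ} {g : Gate n}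
    (hg : C.gates[q]? = some g) (hc : g.costly = true)
    (h : ∀ r ∈ g.refs, ConstAt C r) : ConstAt C q := by
  cases g with
  | inp j => simp [Gate.costly] at hc
  | const b => simp [Gate.costly] at hc
  | not a => simp [Gate.costly] at hc
  | and a1 a2 =>
      obtain ⟨c1, h1⟩ := h a1 (by simp [Gate.refs])
      obtain ⟨c2, h2⟩ := h a2 (by simp [Gate.refs])
      exact ⟨c1 && c2, fun x => by rw [C.V_and x hg, h1 x, h2 x]⟩
  | or a1 a2 =>
      obtain ⟨c1, h1⟩ := h a1 (by simp [Gate.refs])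
      obtain ⟨c2, h2⟩ := h a2 (by simp [Gate.refs])
      exact ⟨c1 || c2, fun x => by rw [C.V_or x hg, h1 x, h2 x]⟩

lemma CostlyAt_setConst {C : Circuit n} {i : Fin n} {c : Bool} {q : ℕ}
    (h : CostlyAt C q) : CostlyAt (C.setConst i c) q := by
  obtain ⟨g, hg, hc⟩ := h
  exact ⟨g.setC i c, by rw [Circuit.setConst_gates, hg]; rfl, by rw [Gate.setC_costly]; exact hc⟩

lemma Reaches_setConst {C : Circuit n} {i : Fin n} {c : Bool} {u w : ℕ}
    (h : C.Reaches u w) : (C.setConst i c).Reaches u w := by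
  induction h with
  | refl => exact Circuit.Reaches.refl
  | @step q r g hq hg hr ih =>
      exact Circuit.Reaches.step ih
        (by rw [Circuit.setConst_gates, hg]; rfl)
        (by rw [Gate.setC_refs]; exact hr)

lemma Circuit.eval_setConst (C : Circuit n) (i : Fin n) (c : Bool) (x : Fin n → Bool) :
    (C.setConst i c).eval x = C.eval (Function.update x i c) := by
  rw [Circuit.eval_eq_V, Circuit.eval_eq_V]
  show (C.setConst i c).V x ((C.setConst i c).output : ℕ) = _
  rw [Circuit.setConst_output, Circuit.V_setConst]

lemma exists_ne_fin (hn2 : 2 ≤ n) (i : Fin n) : ∃ j : Fin n, j ≠ i := by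
  refine ⟨if h : i.val = 0 then ⟨1, by omega⟩ else ⟨0, by omega⟩, ?_⟩
  split <;>
  · intro he
    have := congrArg Fin.val he
    simp at this
    omega

lemma XORf_not_const (hn : 1 ≤ n) (b : Bool) (h : ∀ x, XORf n x = b) : False := by
  set x : Fin n → Bool := fun _ => false with hx
  set i0 : Fin n := ⟨0, by omega⟩
  have h1 := h (Function.update x i0 (!x i0))
  rw [XORf_flip, h x] at h1
  cases b <;> simp at h1

lemma XORf_not_lit (hn2 : 2 ≤ n) (i : Fin n) (s : Bool)
    (h : ∀ x, XORf n x = (if s then x i else !(x i))) : False := by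
  obtain ⟨j, hj⟩ := exists_ne_fin hn2 i
  set x : Fin n → Bool := fun _ => false with hxdef
  have hxi : (Function.update x j (!x j)) i = x i := Function.update_of_ne (Ne.symm hj) _ _
  have h1 := h (Function.update x j (!x j))
  rw [XORf_flip, hxi, ← h x] at h1
  cases hxx : XORf n x <;> rw [hxx] at h1 <;> simp at h1

lemma restricted_flip {i j : Fin n} (hij : j ≠ i) (c : Bool) (x : Fin n → Bool) :
    XORf n (Function.update (Function.update x j (!x j)) i c)
      = !(XORf n (Function.update x i c)) := by
  have h1 : Function.update (Function.update x j (!x j)) i c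
      = Function.update (Function.update x i c) j (!((Function.update x i c) j)) := by
    rw [Function.update_comm hij]
    congr 1
    rw [Function.update_of_ne hij]
  rw [h1, XORf_flip]

lemma XORf_restricted_not_const (hn2 : 2 ≤ n) (i : Fin n) (c : Bool) (b : Bool)
    (h : ∀ x, XORf n (Function.update x i c) = b) : False := by
  obtain ⟨j, hj⟩ := exists_ne_fin hn2 i
  set x : Fin n → Bool := fun _ => false
  have h1 := h (Function.update x j (!x j))
  rw [restricted_flip hj, h x] at h1
  cases b <;> simp at h1

end Helpers
section Existence

variable {n : ℕ}

lemma Circuit.V_ext {C C' : Circuit n} {M : List (Gate n)} (hM : C'.gates = C.gates ++ M)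
    {q : ℕ} (hq : q < C.gates.length) (x : Fin n → Bool) : C'.V x q = C.V x q := by
  show (eAux x C'.gates).getD q false = _
  rw [hM, eAux_prefix x _ _ q hq]
  rfl

/-- Extend a circuit to xor its output with an input. -/
def Circuit.xorExtend (C : Circuit n) (i : Fin n) : Circuit n where
  gates := C.gates ++ [.inp i, .not C.output, .not C.gates.length,
    .and C.output (C.gates.length + 2), .and (C.gates.length + 1) C.gates.length,
    .or (C.gates.length + 3) (C.gates.length + 4)]
  output := ⟨C.gates.length + 5, by simp⟩
  wf := by
    intro q g hg r hr
    have hout := C.output.isLt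
    rw [List.getElem?_append] at hg
    split at hg
    · exact C.wf q g hg r hr
    · rename_i hq
      obtain ⟨k, rfl⟩ : ∃ k, q = C.gates.length + k := ⟨q - C.gates.length, by omega⟩
      rw [show C.gates.length + k - C.gates.length = k by omega] at hg
      have h6 : k < 6 := by
        by_contra h
        rw [List.getElem?_eq_none (by simp; omega)] at hg
        exact nomatch hg
      interval_cases k
      · simp at hg; subst hg; simp [Gate.refs] at hr
      · simp at hg; subst hg; simp [Gate.refs] at hr; omega
      · simp at hg; subst hg; simp [Gate.refs] at hr; omega
      · simp at hg; subst hg; simp [Gate.refs] at hr; rcases hr with rfl | rfl <;> omega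
      · simp at hg; subst hg; simp [Gate.refs] at hr; rcases hr with rfl | rfl <;> omega
      · simp at hg; subst hg; simp [Gate.refs] at hr; rcases hr with rfl | rfl <;> omega
  
lemma Circuit.xorExtend_eval (C : Circuit n) (i : Fin n) (x : Fin n → Bool) :
    (C.xorExtend i).eval x = xor (x i) (C.eval x) := by
  have hM : (C.xorExtend i).gates = C.gates ++ [.inp i, .not C.output, .not C.gates.length,
    .and C.output (C.gates.length + 2), .and (C.gates.length + 1) C.gates.length,
    .or (C.gates.length + 3) (C.gates.length + 4)] := rfl
  have hget : ∀ k : ℕ, (hk : k < 6) → (C.xorExtend i).gates[C.gates.length + k]? =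
      some (([Gate.inp i, .not C.output, .not C.gates.length,
        .and C.output (C.gates.length + 2), .and (C.gates.length + 1) C.gates.length,
        .or (C.gates.length + 3) (C.gates.length + 4)] : List (Gate n))[k]'(by
          simp only [List.length_cons, List.length_nil]; omega)) := by
    intro k hk
    rw [hM, List.getElem?_append_right (by omega),
      show C.gates.length + k - C.gates.length = k by omega]
    rw [List.getElem?_eq_getElem (by simp only [List.length_cons, List.length_nil]; omega)]
  have h0 : (C.xorExtend i).V x C.gates.length = x i :=
    Circuit.V_inp _ _ (by simpa using hget 0 (by omega))
  have hu : (C.xorExtend i).V x C.output = C.eval x := by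
    rw [Circuit.V_ext hM C.output.isLt, Circuit.eval_eq_V]
  have h1 : (C.xorExtend i).V x (C.gates.length+1) = !(C.eval x) := by
    rw [Circuit.V_not _ _ (by simpa using hget 1 (by omega)), hu]
  have h2 : (C.xorExtend i).V x (C.gates.length+2) = !(x i) := by
    rw [Circuit.V_not _ _ (by simpa using hget 2 (by omega)), h0]
  have h3 : (C.xorExtend i).V x (C.gates.length+3) = (C.eval x && !(x i)) := by
    rw [Circuit.V_and _ _ (by simpa using hget 3 (by omega)), hu, h2]
  have h4 : (C.xorExtend i).V x (C.gates.length+4) = (!(C.eval x) && x i) := by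
    rw [Circuit.V_and _ _ (by simpa using hget 4 (by omega)), h1, h0]
  have h5 : (C.xorExtend i).V x (C.gates.length+5)
      = ((C.eval x && !(x i)) || (!(C.eval x) && x i)) := by
    rw [Circuit.V_or _ _ (by simpa using hget 5 (by omega)), h3, h4]
  have hov : ((C.xorExtend i).output : ℕ) = C.gates.length + 5 := rfl
  have hev : (C.xorExtend i).eval x = (C.xorExtend i).V x (C.gates.length+5) := by
    rw [Circuit.eval_eq_V, hov]
  rw [hev, h5]
  cases C.eval x <;> cases x i <;> rfl

def constFalseCircuit (n : ℕ) : Circuit n where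
  gates := [.const false]
  output := ⟨0, by simp⟩
  wf := by
    intro q g hg r hr
    cases q with
    | zero => simp at hg; subst hg; simp [Gate.refs] at hr
    | succ q => simp at hg

lemma constFalseCircuit_eval (x : Fin n → Bool) : (constFalseCircuit n).eval x = false := by
  rw [Circuit.eval_eq_V]
  exact Circuit.V_constg _ _ (by simp [constFalseCircuit])

lemma exists_foldr_circuit (l : List (Fin n)) :
    ∃ C : Circuit n, C.Computes (fun x => l.foldr (fun i acc => xor (x i) acc) false) := by
  induction l with
  | nil => exact ⟨constFalseCircuit n, fun x => constFalseCircuit_eval x⟩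
  | cons i l ih =>
      obtain ⟨C, hC⟩ := ih
      refine ⟨C.xorExtend i, fun x => ?_⟩
      show (C.xorExtend i).eval x = xor (x i) (l.foldr (fun i acc => xor (x i) acc) false)
      rw [C.xorExtend_eval i x, hC x]

lemma exists_xor_circuit (n : ℕ) : ∃ C : Circuit n, C.Computes (XORf n) := by
  obtain ⟨C, hC⟩ := exists_foldr_circuit (List.finRange n)
  refine ⟨C, fun x => ?_⟩
  rw [hC x, XORf_eq_zsum]
  have f1 : ∀ z : ZMod 2, decide (1 + z = 1) = !decide (z = 1) := by decide
  have f2 : ∀ z : ZMod 2, decide (z = 1) = !decide (z = 0) := by decide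
  have key : ∀ l : List (Fin n), l.foldr (fun i acc => xor (x i) acc) false
      = decide ((l.map (fun i => if x i then (1 : ZMod 2) else 0)).sum = 1) := by
    intro l
    induction l with
    | nil => simp
    | cons i l ihl =>
        rw [List.foldr_cons, ihl, List.map_cons, List.sum_cons]
        cases hxi : x i <;> simp [f1, f2]
  show List.foldr (fun i acc => xor (x i) acc) false (List.finRange n) = decide (zsum x = 1)
  rw [key]
  have hz : zsum x = ((List.finRange n).map (fun i => if x i then (1:ZMod 2) else 0)).sum := by
    unfold zsum
    rw [Fin.sum_univ_def]
  rw [hz]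

end Existence
section Main

lemma main_lb : ∀ (s n : ℕ), 1 ≤ n → ∀ C : Circuit n, C.Computes (XORf n) → C.size ≤ s →
    3 * (n - 1) ≤ C.size := by
  intro s
  induction s using Nat.strong_induction_on with
  | _ s IH =>
  intro n hn C hC hsz
  rcases Nat.lt_or_ge n 2 with hn2 | hn2
  · have : n = 1 := by omega
    subst this
    simp
  classical
  have step1 : ∀ C' : Circuit n, (∀ x, C'.eval x = C.eval x) → C'.size + 1 = C.size →
      3 * (n - 1) ≤ C.size := by
    intro C' hev hsz'
    have hlt : C'.size < s := by omega
    have := IH C'.size hlt n hn C' (fun x => (hev x).trans (hC x)) (le_refl _)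
    omega
  by_cases hdead : ∃ p, CostlyAt C p ∧ ¬ C.Reaches (C.output : ℕ) p
  · obtain ⟨p, hp, hnr⟩ := hdead
    exact step1 (C.toConst p false) (fun x => C.eval_toConst_dead hnr x) (hp.size_toConst' false)
  push_neg at hdead
  by_cases hcost : ∃ p, CostlyAt C p
  swap
  · exfalso
    push_neg at hcost
    rcases litOrConst C (C.output : ℕ) (fun r _ => hcost r) with ⟨⟨ii, sl⟩, hl⟩ | ⟨b, hb⟩
    · exact XORf_not_lit hn2 ii sl
        (fun x => by rw [← hC x, Circuit.eval_eq_V]; exact litSrc_val _ ii sl hl x)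
    · exact XORf_not_const hn b (fun x => by rw [← hC x, Circuit.eval_eq_V]; exact hb x)
  · have hfind := Nat.find_spec hcost
    set p₀ := Nat.find hcost with hp₀def
    have hmin : ∀ r, r < p₀ → ¬ CostlyAt C r := fun r hr => Nat.find_min hcost hr
    obtain ⟨g₀, hg₀, hc₀⟩ := hfind
    obtain ⟨a1, a2, w, hrefs, habs1, habs2, hneu1, hneu2, hls₀⟩ :
      ∃ a1 a2 w, g₀.refs = [a1, a2] ∧
        (∀ (D : Circuit n) (q : ℕ) (x), D.gates[q]? = some g₀ → D.V x a1 = w → D.V x q = w) ∧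
        (∀ (D : Circuit n) (q : ℕ) (x), D.gates[q]? = some g₀ → D.V x a2 = w → D.V x q = w) ∧
        (∀ (D : Circuit n) (q : ℕ) (x), D.gates[q]? = some g₀ → D.V x a1 = !w →
          D.V x q = D.V x a2) ∧
        (∀ (D : Circuit n) (q : ℕ) (x), D.gates[q]? = some g₀ → D.V x a2 = !w →
          D.V x q = D.V x a1) ∧
        (∀ (D : Circuit n) (q : ℕ), D.gates[q]? = some g₀ → litSrc D q = none) := by
      cases g₀ with
      | inp k => simp [Gate.costly] at hc₀
      | const b => simp [Gate.costly] at hc₀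
      | not a => simp [Gate.costly] at hc₀
      | and b1 b2 =>
          refine ⟨b1, b2, false, rfl, ?_, ?_, ?_, ?_, ?_⟩
          · intro D q x hg hv; rw [D.V_and x hg, hv]; rfl
          · intro D q x hg hv; rw [D.V_and x hg, hv]; simp
          · intro D q x hg hv; rw [D.V_and x hg, hv]; simp
          · intro D q x hg hv; rw [D.V_and x hg, hv]; simp
          · intro D q hg; exact litSrc_and hg
      | or b1 b2 =>
          refine ⟨b1, b2, true, rfl, ?_, ?_, ?_, ?_, ?_⟩
          · intro D q x hg hv; rw [D.V_or x hg, hv]; rfl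
          · intro D q x hg hv; rw [D.V_or x hg, hv]; simp
          · intro D q x hg hv; rw [D.V_or x hg, hv]; simp
          · intro D q x hg hv; rw [D.V_or x hg, hv]; simp
          · intro D q hg; exact litSrc_or hg
    have ha1 : a1 < p₀ := C.wf p₀ g₀ hg₀ a1 (by rw [hrefs]; simp)
    have ha2 : a2 < p₀ := C.wf p₀ g₀ hg₀ a2 (by rw [hrefs]; simp)
    have ha1m : a1 ∈ g₀.refs := by rw [hrefs]; simp
    have ha2m : a2 ∈ g₀.refs := by rw [hrefs]; simp
    rcases litOrConst C a1 (fun r hr => hmin r (by omega)) with ⟨⟨i, sa⟩, hlA⟩ | hca1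
    swap
    · obtain ⟨C', hev, hsz', _, _⟩ := elim_one C ⟨g₀, hg₀, hc₀⟩
        (red_of_hcr ⟨g₀, hg₀, hc₀⟩ ⟨g₀, hg₀, a1, ha1m, hca1⟩)
      exact step1 C' hev hsz'
    rcases litOrConst C a2 (fun r hr => hmin r (by omega)) with ⟨⟨j, sb⟩, hlB⟩ | hca2
    swap
    · obtain ⟨C', hev, hsz', _, _⟩ := elim_one C ⟨g₀, hg₀, hc₀⟩
        (red_of_hcr ⟨g₀, hg₀, hc₀⟩ ⟨g₀, hg₀, a2, ha2m, hca2⟩)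
      exact step1 C' hev hsz'
    have hVa1 : ∀ x, C.V x a1 = (if sa then x i else !(x i)) := litSrc_val a1 i sa hlA
    have hVa2 : ∀ x, C.V x a2 = (if sb then x j else !(x j)) := litSrc_val a2 j sb hlB
    by_cases hij : i = j
    · subst hij
      by_cases hsab : sa = sb
      · have hv12 : ∀ x, C.V x a2 = C.V x a1 := fun x => by rw [hVa1, hVa2, hsab]
        have hvp : ∀ x, C.V x a1 = C.V x p₀ := by
          intro x
          have hcases : C.V x a1 = w ∨ C.V x a1 = !w := by
            cases (C.V x a1) <;> cases w <;> simp
          rcases hcases with h | h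
          · exact h.trans (habs1 C p₀ x hg₀ h).symm
          · exact (hv12 x).symm.trans (hneu1 C p₀ x hg₀ h).symm
        obtain ⟨C', hev, hsz', _, _⟩ := elim_one C ⟨g₀, hg₀, hc₀⟩ (Or.inr ⟨a1, ha1, hvp⟩)
        exact step1 C' hev hsz'
      · have hv12 : ∀ x, C.V x a2 = !(C.V x a1) := fun x => by
          rw [hVa1, hVa2]
          cases sa <;> cases sb <;> simp_all
        have hvp : ∀ x, C.V x p₀ = w := by
          intro x
          have hcases : C.V x a1 = w ∨ C.V x a1 = !w := by
            cases (C.V x a1) <;> cases w <;> simp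
          rcases hcases with h | h
          · exact habs1 C p₀ x hg₀ h
          · exact habs2 C p₀ x hg₀ (by rw [hv12 x, h]; simp)
        obtain ⟨C', hev, hsz', _, _⟩ := elim_one C ⟨g₀, hg₀, hc₀⟩ (Or.inl ⟨w, hvp⟩)
        exact step1 C' hev hsz'
    · -- MAIN CASE: distinct variables
      set c : Bool := if sa then w else !w with hcdef
      set c' : Bool := if sb then w else !w with hc'def
      obtain ⟨h', gh, r1, s1, hgh, hghc, hne', hr1m, hlit1⟩ :
        ∃ h' gh r1 s1, C.gates[h']? = some gh ∧ gh.costly = true ∧ h' ≠ p₀ ∧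
          r1 ∈ gh.refs ∧ litSrc C r1 = some (i, s1) := by
        by_contra hno
        push_neg at hno
        set D := C.setConst j c' with hDdef
        have hP : ∀ q, (∀ x bb, D.V (Function.update x i bb) q = D.V x q) ∨
            (∃ s, litSrc C q = some (i, s)) := by
          intro q
          induction q using Nat.strong_induction_on with
          | _ q ihq =>
          cases hg : C.gates[q]? with
          | none =>
              left; intro x bb
              rw [D.V_oob _ (by rw [hDdef, Circuit.setConst_len]; exact len_none hg),
                D.V_oob _ (by rw [hDdef, Circuit.setConst_len]; exact len_none hg)]
          | some g =>
              have hgD : D.gates[q]? = some (g.setC j c') := by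
                rw [hDdef, Circuit.setConst_gates, hg]; rfl
              cases g with
              | inp k =>
                  by_cases hkj : k = j
                  · left; intro x bb
                    subst hkj
                    rw [show (Gate.inp k).setC k c' = Gate.const c' by simp [Gate.setC]] at hgD
                    rw [Circuit.V_constg _ _ hgD, Circuit.V_constg _ _ hgD]
                  · rw [show (Gate.inp k).setC j c' = Gate.inp k by simp [Gate.setC, hkj]] at hgD
                    by_cases hki : k = i
                    · right; subst hki; exact ⟨true, litSrc_inp hg⟩
                    · left; intro x bb
                      rw [Circuit.V_inp _ _ hgD, Circuit.V_inp _ _ hgD]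
                      exact Function.update_of_ne hki _ _
              | const b =>
                  left; intro x bb
                  rw [show (Gate.const b : Gate n).setC j c' = Gate.const b from rfl] at hgD
                  rw [Circuit.V_constg _ _ hgD, Circuit.V_constg _ _ hgD]
              | not a =>
                  have ha : a < q := C.wf q _ hg a (by simp [Gate.refs])
                  rw [show (Gate.not a : Gate n).setC j c' = Gate.not a from rfl] at hgD
                  rcases ihq a ha with hL | ⟨s, hs⟩
                  · left; intro x bb
                    rw [Circuit.V_not _ _ hgD, Circuit.V_not _ _ hgD, hL x bb]
                  · right; exact ⟨!s, by rw [litSrc_not hg ha, hs]; rfl⟩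
              | and b1 b2 =>
                  have hb1 : b1 < q := C.wf q _ hg b1 (by simp [Gate.refs])
                  have hb2 : b2 < q := C.wf q _ hg b2 (by simp [Gate.refs])
                  rw [show (Gate.and b1 b2 : Gate n).setC j c' = Gate.and b1 b2 from rfl] at hgD
                  by_cases hqp : q = p₀
                  · subst hqp
                    have hgg : Gate.and b1 b2 = g₀ := Option.some.inj (hg.symm.trans hg₀)
                    rw [hgg] at hgD
                    have hva2 : ∀ y, D.V y a2 = w := by
                      intro y
                      rw [hDdef, Circuit.V_setConst, hVa2, Function.update_self]
                      cases sb <;> simp [hc'def]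
                    left; intro x bb
                    rw [habs2 D p₀ _ hgD (hva2 _), habs2 D p₀ _ hgD (hva2 _)]
                  · rcases ihq b1 hb1 with hL1 | ⟨s, hs⟩
                    swap
                    · exact absurd hs (hno q _ b1 s hg rfl hqp (by simp [Gate.refs]))
                    rcases ihq b2 hb2 with hL2 | ⟨s, hs⟩
                    swap
                    · exact absurd hs (hno q _ b2 s hg rfl hqp (by simp [Gate.refs]))
                    left; intro x bb
                    rw [Circuit.V_and _ _ hgD, Circuit.V_and _ _ hgD, hL1 x bb, hL2 x bb]
              | or b1 b2 =>
                  have hb1 : b1 < q := C.wf q _ hg b1 (by simp [Gate.refs])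
                  have hb2 : b2 < q := C.wf q _ hg b2 (by simp [Gate.refs])
                  rw [show (Gate.or b1 b2 : Gate n).setC j c' = Gate.or b1 b2 from rfl] at hgD
                  by_cases hqp : q = p₀
                  · subst hqp
                    have hgg : Gate.or b1 b2 = g₀ := Option.some.inj (hg.symm.trans hg₀)
                    rw [hgg] at hgD
                    have hva2 : ∀ y, D.V y a2 = w := by
                      intro y
                      rw [hDdef, Circuit.V_setConst, hVa2, Function.update_self]
                      cases sb <;> simp [hc'def]
                    left; intro x bb
                    rw [habs2 D p₀ _ hgD (hva2 _), habs2 D p₀ _ hgD (hva2 _)]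
                  · rcases ihq b1 hb1 with hL1 | ⟨s, hs⟩
                    swap
                    · exact absurd hs (hno q _ b1 s hg rfl hqp (by simp [Gate.refs]))
                    rcases ihq b2 hb2 with hL2 | ⟨s, hs⟩
                    swap
                    · exact absurd hs (hno q _ b2 s hg rfl hqp (by simp [Gate.refs]))
                    left; intro x bb
                    rw [Circuit.V_or _ _ hgD, Circuit.V_or _ _ hgD, hL1 x bb, hL2 x bb]
        rcases hP (C.output : ℕ) with hL | ⟨s, hs⟩
        · have hDev : ∀ y, D.V y (C.output : ℕ) = XORf n (Function.update y j c') := by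
            intro y
            have h1 : D.eval y = D.V y (C.output : ℕ) := by
              rw [Circuit.eval_eq_V]
              rfl
            rw [← h1, hDdef, Circuit.eval_setConst, hC _]
          set x0 : Fin n → Bool := fun _ => false with hx0
          have h1 := hL x0 (!x0 i)
          rw [hDev, hDev, restricted_flip hij c' x0] at h1
          cases hxx : XORf n (Function.update x0 j c') <;> rw [hxx] at h1 <;> simp at h1
        · exact XORf_not_lit hn2 i s
            (fun x => by rw [← hC x, Circuit.eval_eq_V]; exact litSrc_val _ i s hs x)
      -- restrict x_i := c
      set C₁ := C.setConst i c with hC₁def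
      have hg₀₁ : C₁.gates[p₀]? = some g₀ := by
        rw [hC₁def, Circuit.setConst_gates, hg₀]
        rw [Option.map_some, Gate.setC_eq_of_costly hc₀]
      have hca1v : ∀ x, C₁.V x a1 = w := by
        intro x
        rw [hC₁def, Circuit.V_setConst, hVa1, Function.update_self]
        cases sa <;> simp [hcdef]
      have hcp₀ : ConstAt C₁ p₀ := ⟨w, fun x => habs1 C₁ p₀ x hg₀₁ (hca1v x)⟩
      have hhcrp₀ : HasConstRef C₁ p₀ := ⟨g₀, hg₀₁, a1, ha1m, ⟨w, hca1v⟩⟩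
      have hcostp₀₁ : CostlyAt C₁ p₀ := ⟨g₀, hg₀₁, hc₀⟩
      have hcr1v : ∀ x, C₁.V x r1 = (if s1 then c else !c) := by
        intro x
        rw [hC₁def, Circuit.V_setConst, litSrc_val r1 i s1 hlit1, Function.update_self]
      have hgh₁ : C₁.gates[h']? = some gh := by
        rw [hC₁def, Circuit.setConst_gates, hgh]
        rw [Option.map_some, Gate.setC_eq_of_costly hghc]
      have hhcrh : HasConstRef C₁ h' := ⟨gh, hgh₁, r1, hr1m, ⟨_, hcr1v⟩⟩
      have hcosth₁ : CostlyAt C₁ h' := ⟨gh, hgh₁, hghc⟩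
      have hF : ∀ x, C₁.eval x = XORf n (Function.update x i c) := by
        intro x
        rw [hC₁def, Circuit.eval_setConst, hC _]
      have hout₁ : (C₁.output : ℕ) = (C.output : ℕ) := by rw [hC₁def]; rfl
      have hnc_out : ¬ ConstAt C₁ (C.output : ℕ) := by
        rintro ⟨b, hb⟩
        refine XORf_restricted_not_const hn2 i c b (fun x => ?_)
        calc XORf n (Function.update x i c) = C₁.eval x := (hF x).symm
          _ = C₁.V x (C₁.output : ℕ) := Circuit.eval_eq_V _ _
          _ = C₁.V x (C.output : ℕ) := by rw [hout₁]
          _ = b := hb x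
      have hNstep : ∀ q ww, C₁.gates[q]? = some (.not ww) →
          litSrc C ww = none → litSrc C q = none := by
        intro q ww hg1 hNw
        rw [hC₁def, Circuit.setConst_gates] at hg1
        rcases Option.map_eq_some_iff.1 hg1 with ⟨g, hg, hmap⟩
        have hgnot : g = .not ww := by
          cases g with
          | inp k =>
              simp only [Gate.setC] at hmap
              split at hmap <;> exact nomatch hmap
          | const b => exact nomatch hmap
          | not a => exact hmap
          | and x y => exact nomatch hmap
          | or x y => exact nomatch hmap
        subst hgnot
        have hww : ww < q := C.wf q _ hg ww (by simp [Gate.refs])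
        rw [litSrc_not hg hww, hNw]
        rfl
      have hreach₀ : C₁.Reaches (C.output : ℕ) p₀ := by
        rw [hC₁def]
        exact Reaches_setConst (hdead p₀ ⟨g₀, hg₀, hc₀⟩)
      obtain ⟨k₁, gk₁, r, hk₁g, hk₁c, hrm, hrconst, hrN, hrp₀, hrk₁⟩ :=
        pathfind C₁ (fun q => litSrc C q = none) hNstep (C.output : ℕ) p₀ hreach₀
          (hls₀ C p₀ hg₀) hcp₀ hnc_out
      obtain ⟨t, htc, hthcr, htp₀, hth'⟩ :
        ∃ t, CostlyAt C₁ t ∧ HasConstRef C₁ t ∧ t ≠ p₀ ∧ t ≠ h' := by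
        by_cases hk₁h : k₁ = h'
        · rw [hk₁h] at hk₁g hrk₁
          have hgeq : gh = gk₁ := Option.some.inj (hgh₁.symm.trans hk₁g)
          subst hgeq
          have hrne : r ≠ r1 := by
            intro h
            rw [h, hlit1] at hrN
            exact nomatch hrN
          obtain ⟨b1, b2, hbrefs⟩ := Gate.costly_shape hghc
          rw [hbrefs] at hrm hr1m
          simp at hrm hr1m
          have hbot : ConstAt C₁ b1 ∧ ConstAt C₁ b2 := by
            rcases hrm with rfl | rfl <;> rcases hr1m with h1 | h1
            · exact absurd h1.symm hrne
            · exact ⟨hrconst, h1 ▸ ⟨_, hcr1v⟩⟩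
            · exact ⟨h1 ▸ ⟨_, hcr1v⟩, hrconst⟩
            · exact absurd h1.symm hrne
          have hch' : ConstAt C₁ h' := ConstAt_of_refs_const hgh₁ hghc (by
            rw [hbrefs]
            rintro rr hrr
            simp at hrr
            rcases hrr with rfl | rfl
            exacts [hbot.1, hbot.2])
          have hreachh : C₁.Reaches (C.output : ℕ) h' := by
            rw [hC₁def]
            exact Reaches_setConst (hdead h' ⟨gh, hgh, hghc⟩)
          obtain ⟨k₂, gk₂, r₂, h2g, h2c, h2m, h2const, _, h2rh, h2rk⟩ :=
            pathfind C₁ (fun q => litSrc C q = none) hNstep (C.output : ℕ) h' hreachh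
              (litSrc_none_of_costly hgh hghc) hch' hnc_out
          exact ⟨k₂, ⟨gk₂, h2g, h2c⟩, ⟨gk₂, h2g, r₂, h2m, h2const⟩, by omega, by omega⟩
        · exact ⟨k₁, ⟨gk₁, hk₁g, hk₁c⟩, ⟨gk₁, hk₁g, r, hrm, hrconst⟩, by omega, hk₁h⟩
      have hSmem : ∀ p ∈ ({p₀, h', t} : Finset ℕ), CostlyAt C₁ p ∧ HasConstRef C₁ p := by
        intro p hp
        simp at hp
        rcases hp with rfl | rfl | rfl
        exacts [⟨hcostp₀₁, hhcrp₀⟩, ⟨hcosth₁, hhcrh⟩, ⟨htc, hthcr⟩]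
      have hScard : ({p₀, h', t} : Finset ℕ).card = 3 := by
        rw [Finset.card_insert_of_notMem (by
            simp
            exact ⟨Ne.symm hne', Ne.symm htp₀⟩),
          Finset.card_insert_of_notMem (by simp; exact Ne.symm hth'),
          Finset.card_singleton]
      obtain ⟨C₂, hC₂, hsz₂⟩ := elim_many {p₀, h', t} C₁
        (fun x => XORf n (Function.update x i c)) hSmem hF
      rw [hScard] at hsz₂
      have hsz₁ : C₁.size = C.size := by rw [hC₁def]; exact C.size_setConst i c
      obtain ⟨m, rfl⟩ : ∃ m, n = m + 1 := ⟨n - 1, by omega⟩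
      have hm : 1 ≤ m := by omega
      have hC₃ : ∀ y, (C₂.contract i c).eval y = xor c (XORf m y) := by
        intro y
        rw [Circuit.eval_contract, hC₂ _]
        show XORf (m+1) (Function.update (i.insertNth c y : Fin (m+1) → Bool) i c)
          = xor c (XORf m y)
        have hupd : Function.update (i.insertNth c y : Fin (m+1) → Bool) i c
            = (i.insertNth c y : Fin (m+1) → Bool) := by
          funext z
          by_cases hz : z = i
          · subst hz; simp
          · simp [Function.update_of_ne hz]
        rw [hupd, XORf_insertNth]
      have hfinal : ∃ C₅ : Circuit m, C₅.Computes (XORf m) ∧ C₅.size = C₂.size := by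
        by_cases hcv : c = true
        · refine ⟨(C₂.contract i c).appendNot, fun y => ?_, ?_⟩
          · rw [Circuit.eval_appendNot, hC₃ y, hcv]; simp
          · rw [Circuit.size_appendNot, Circuit.size_contract]
        · have hcf : c = false := by revert hcv; cases c <;> simp
          refine ⟨C₂.contract i c, fun y => ?_, Circuit.size_contract _ _ _⟩
          rw [hC₃ y, hcf]; simp
      obtain ⟨C₅, hC₅, hsz₅⟩ := hfinal
      have hlt3 : C₅.size < s := by omega
      have hIH := IH C₅.size hlt3 m hm C₅ hC₅ (le_refl _)
      have : 3 * m ≤ C.size := by omega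
      simpa using this

end Main

/-- Schnorr's lower bound: for every `n ≥ 1`, every DeMorgan circuit
computing `XOR_n` has at least `3(n-1)` binary gates; that is, `CC(XOR_n) ≥ 3(n-1)`. -/
theorem schnorr_lower_bound :
    ∀ n : ℕ, 1 ≤ n →
      (∀ C : Circuit n, C.Computes (XORf n) → 3 * (n - 1) ≤ C.size) ∧
      3 * (n - 1) ≤ CC n (XORf n) := by
  intro n hn
  constructor
  · intro C hC
    exact main_lb C.size n hn C hC (le_refl _)
  · obtain ⟨C0, hC0⟩ := exists_xor_circuit n
    have hne : {s | ∃ C : Circuit n, C.Computes (XORf n) ∧ C.size = s}.Nonempty :=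
      ⟨C0.size, C0, hC0, rfl⟩
    obtain ⟨C1, hC1, hsize⟩ := Nat.sInf_mem hne
    have hmain := main_lb C1.size n hn C1 hC1 (le_refl _)
    rw [hsize] at hmain
    exact hmain
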